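/- Let Z be a subset of the free monoid on an alphabet α that is a finite union of sandwiches. Then there exist a finite subset F of Z and finitely many sandwiches a_1⟨w_1⟩b_1, …, a_N⟨w_N⟩b_N with w_i ≠ 1 for all i, such that F and the sandwiches a_i⟨w_i⟩b_i are pairwise disjoint and their union is Z; moreover each of these sandwiches is free (the map n ↦ a_i * w_i^n * b_i is injective). -/

import Mathlib

/-- The sandwich `a⟨w⟩b = {a * w^n * b : n ∈ ℕ}` in a monoid. -/
def sandwich {S : Type*} [Monoid S] (a w b : S) : Set S :=
  Set.range fun n : ℕ => a * w ^ n * b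

namespace SandwichAux

variable {α : Type*}

lemma length_pow (w : FreeMonoid α) (n : ℕ) : (w ^ n).length = n * w.length := by
  induction n with
  | zero => rw [pow_zero, Nat.zero_mul]; rfl
  | succ n ih => rw [pow_succ, FreeMonoid.length_mul, ih]; ring

lemma sandwich_injective (a w b : FreeMonoid α) (hw : w ≠ 1) :
    Function.Injective fun n : ℕ => a * w ^ n * b := by
  have hw0 : 0 < w.length :=
    Nat.pos_of_ne_zero (fun h => hw (FreeMonoid.length_eq_zero.mp h))
  intro m n h
  have := congrArg FreeMonoid.length h
  simp only [FreeMonoid.length_mul, length_pow] at this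
  have : m * w.length = n * w.length := by omega
  exact Nat.eq_of_mul_eq_mul_right hw0 this

lemma mul_eq_mul_cases (u v s t : FreeMonoid α) (h : u * v = s * t) :
    (∃ c, s = u * c ∧ v = c * t) ∨ (∃ c, u = s * c ∧ t = c * v) := by
  have h2 : u.toList ++ v.toList = s.toList ++ t.toList := by
    simpa using congrArg FreeMonoid.toList h
  rcases List.append_eq_append_iff.mp h2 with ⟨c, hc1, hc2⟩ | ⟨c, hc1, hc2⟩
  · left
    refine ⟨FreeMonoid.ofList c, FreeMonoid.toList.injective ?_, FreeMonoid.toList.injective ?_⟩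
    · simpa using hc1
    · simpa using hc2
  · right
    refine ⟨FreeMonoid.ofList c, FreeMonoid.toList.injective ?_, FreeMonoid.toList.injective ?_⟩
    · simpa using hc1
    · simpa using hc2

/-- Core word-combinatorics lemma: two coincidences propagate. -/
lemma core (A b B b' x y : FreeMonoid α) (h0 : A * b = B * b')
    (h1 : A * (x * b) = B * (y * b')) (k : ℕ) :
    A * (x ^ k * b) = B * (y ^ k * b') := by
  have key : ∀ (A b B b' x y : FreeMonoid α), A * b = B * b' →
      A * (x * b) = B * (y * b') → (∃ c, B = A * c ∧ b = c * b') →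
      ∀ k, A * (x ^ k * b) = B * (y ^ k * b') := by
    rintro A b B b' x y h0 h1 ⟨c, rfl, rfl⟩ k
    -- from h1 : A * (x * (c * b')) = A * c * (y * b')
    have hxc : x * c = c * y := by
      have := h1
      rw [← mul_assoc, ← mul_assoc] at this
      have h2 : A * x * c * b' = A * c * y * b' := by
        rw [mul_assoc (A*x) c b'] at this ⊢
        rw [mul_assoc (A*c) y b']
        exact this
      have := mul_right_cancel h2
      have h3 : A * (x * c) = A * (c * y) := by
        rw [← mul_assoc, ← mul_assoc]; exact this
      exact mul_left_cancel h3
    have hpow : x ^ k * c = c * y ^ k := by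
      induction k with
      | zero => simp
      | succ k ih => rw [pow_succ, pow_succ, mul_assoc, hxc, ← mul_assoc, ih, mul_assoc]
    calc A * (x ^ k * (c * b')) = A * ((x ^ k * c) * b') := by rw [mul_assoc]
      _ = A * (c * y ^ k * b') := by rw [hpow]
      _ = A * c * (y ^ k * b') := by simp [mul_assoc]
  rcases mul_eq_mul_cases A b B b' h0 with hc | hc
  · exact key A b B b' x y h0 h1 hc k
  · exact (key B b' A b y x h0.symm h1.symm hc k).symm

lemma rearr (a w b : FreeMonoid α) (m p k : ℕ) :
    a * w ^ (m + p * k) * b = (a * w ^ m) * ((w ^ p) ^ k * b) := by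
  rw [pow_add, pow_mul]; simp [mul_assoc]

/-- The index set of one sandwich inside another is AP-closed. -/
lemma sandwich_index_closed (a w b a' w' b' : FreeMonoid α) (hw : w ≠ 1) (hw' : w' ≠ 1) :
    ∀ m ∈ {n : ℕ | a * w ^ n * b ∈ sandwich a' w' b'},
    ∀ n ∈ {n : ℕ | a * w ^ n * b ∈ sandwich a' w' b'},
      m < n → ∀ k, m + k * (n - m) ∈ {n : ℕ | a * w ^ n * b ∈ sandwich a' w' b'} := by
  rintro m ⟨m', hm⟩ n ⟨n', hn⟩ hmn k
  have hlw : 0 < w.length :=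
    Nat.pos_of_ne_zero (fun h => hw (FreeMonoid.length_eq_zero.mp h))
  have hlw' : 0 < w'.length :=
    Nat.pos_of_ne_zero (fun h => hw' (FreeMonoid.length_eq_zero.mp h))
  have l1 := congrArg FreeMonoid.length hm
  have l2 := congrArg FreeMonoid.length hn
  simp only [FreeMonoid.length_mul, length_pow] at l1 l2
  have hmul : m * w.length < n * w.length := Nat.mul_lt_mul_of_lt_of_le hmn le_rfl hlw
  have hmul' : m' * w'.length < n' * w'.length := by omega
  have hm'n' : m' < n' := Nat.lt_of_mul_lt_mul_right hmul'
  set p := n - m with hp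
  set q := n' - m' with hq
  have e1 : (a * w ^ m) * (w ^ p * b) = a * w ^ n * b := by
    rw [← mul_assoc, mul_assoc a (w ^ m) (w ^ p), ← pow_add]
    have : m + p = n := by omega
    rw [this]
  have e2 : (a' * w' ^ m') * (w' ^ q * b') = a' * w' ^ n' * b' := by
    rw [← mul_assoc, mul_assoc a' (w' ^ m') (w' ^ q), ← pow_add]
    have : m' + q = n' := by omega
    rw [this]
  have hcore := core (a * w ^ m) b (a' * w' ^ m') b' (w ^ p) (w' ^ q) hm.symm
    (by rw [e1, e2]; exact hn.symm) k
  refine ⟨m' + q * k, ?_⟩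
  show a' * w' ^ (m' + q * k) * b' = a * w ^ (m + k * (n - m)) * b
  have hk : m + k * (n - m) = m + p * k := by rw [Nat.mul_comm]
  rw [hk, rearr a w b m p k, rearr a' w' b' m' q k]
  exact hcore.symm

/-! ### Eventually periodic sets of naturals -/

def EP (s : Set ℕ) : Prop := ∃ d, 0 < d ∧ ∃ M, ∀ n, M ≤ n → (n ∈ s ↔ n + d ∈ s)

lemma EP.iterate {s : Set ℕ} {d M : ℕ} (h : ∀ n, M ≤ n → (n ∈ s ↔ n + d ∈ s)) :
    ∀ k n, M ≤ n → (n ∈ s ↔ n + k * d ∈ s) := by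
  intro k
  induction k with
  | zero => simp
  | succ k ih =>
    intro n hn
    rw [ih n hn, Nat.succ_mul]
    have := h (n + k * d) (by omega)
    rw [this]
    ring_nf

lemma EP.compl {s : Set ℕ} (h : EP s) : EP sᶜ := by
  obtain ⟨d, hd, M, hM⟩ := h
  exact ⟨d, hd, M, fun n hn => by simp [Set.mem_compl_iff, hM n hn]⟩

lemma EP.union {s t : Set ℕ} (hs : EP s) (ht : EP t) : EP (s ∪ t) := by
  obtain ⟨d, hd, M, hM⟩ := hs
  obtain ⟨e, he, K, hK⟩ := ht
  refine ⟨d * e, by positivity, max M K, fun n hn => ?_⟩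
  have h1 : (n ∈ s ↔ n + e * d ∈ s) := EP.iterate hM e n (le_trans (le_max_left _ _) hn)
  have h2 : (n ∈ t ↔ n + d * e ∈ t) := EP.iterate hK d n (le_trans (le_max_right _ _) hn)
  rw [mul_comm e d] at h1
  simp only [Set.mem_union]
  rw [h1, h2]

lemma EP.of_forall_not {s : Set ℕ} {M : ℕ} (h : ∀ n, M ≤ n → n ∉ s) : EP s :=
  ⟨1, one_pos, M, fun n hn => by simp [h n hn, h (n+1) (by omega)]⟩

lemma EP.of_finite {s : Set ℕ} (h : s.Finite) : EP s := by
  rcases s.eq_empty_or_nonempty with rfl | hne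
  · exact EP.of_forall_not (M := 0) (by simp)
  obtain ⟨M, hM⟩ := h.bddAbove
  exact EP.of_forall_not (M := M + 1) (fun n hn hns => by
    have := hM hns; omega)

/-- AP-closed sets are eventually periodic. -/
lemma EP.of_closed {T : Set ℕ}
    (hT : ∀ m ∈ T, ∀ n ∈ T, m < n → ∀ k, m + k * (n - m) ∈ T) : EP T := by
  rcases T.finite_or_infinite with hfin | hinf
  · exact EP.of_finite hfin
  obtain ⟨m0, hm0⟩ := hinf.nonempty
  have hrec : ∀ g, 0 < g →
      (∃ c, c ∈ T ∧ m0 ≤ c ∧ g ∣ (c - m0) ∧ ∀ k : ℕ, c + k * g ∈ T) → EP T := by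
    intro g
    induction g using Nat.strong_induction_on with
    | _ g ih =>
      rintro hg ⟨c, hcT, hc0, hdvd, hAP⟩
      by_cases hall : ∀ t ∈ T, g ∣ (t - m0)
      · -- done: T is exactly an AP beyond c
        have char : ∀ n, c ≤ n → (n ∈ T ↔ g ∣ (n - c)) := by
          intro n hn
          constructor
          · intro hnT
            have h1 := hall n hnT
            have h2 : (n - m0) - (c - m0) = n - c := by omega
            have := Nat.dvd_sub h1 hdvd
            rwa [h2] at this
          · intro hdv
            obtain ⟨k, hk⟩ := hdv
            have hcm : g * k = k * g := Nat.mul_comm g k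
            have : n = c + k * g := by omega
            rw [this]
            exact hAP k
        refine ⟨g, hg, c, fun n hn => ?_⟩
        rw [char n hn, char (n + g) (by omega)]
        have h3 : n + g - c = (n - c) + g := by omega
        rw [h3, Nat.dvd_add_self_right]
      · push_neg at hall
        obtain ⟨t, htT, hnd⟩ := hall
        set e := t - m0 with he
        have he0 : 0 < e := by
          rcases Nat.eq_zero_or_pos e with h | h
          · exact absurd (h ▸ dvd_zero g) hnd
          · exact h
        have htm0 : m0 < t := by
          by_contra hcon
          have : e = 0 := by omega
          omega
        set g2 := Nat.gcd g e with hg2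
        have hg2pos : 0 < g2 := Nat.gcd_pos_of_pos_left e hg
        have hg2lt : g2 < g := by
          have h1 : g2 ∣ g := Nat.gcd_dvd_left g e
          have h2 : g2 ≤ g := Nat.le_of_dvd hg h1
          rcases lt_or_eq_of_le h2 with h | h
          · exact h
          · exact absurd (h ▸ Nat.gcd_dvd_right g e) hnd
        -- Bezout: find K : ℕ with (K * e : ℤ) ≡ g2 [ZMOD g]
        set B : ℤ := Nat.gcdB g e with hB
        set A : ℤ := Nat.gcdA g e with hA
        have hbez : (g2 : ℤ) = g * A + e * B := Nat.gcd_eq_gcd_ab g e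
        set s : ℕ := c + g2 with hs
        set K : ℕ := (B % (g : ℤ)).toNat + g * s with hK
        have hgz : (0 : ℤ) < g := by exact_mod_cast hg
        have hKB : (K : ℤ) % g = B % g := by
          have h1 : 0 ≤ B % (g : ℤ) := Int.emod_nonneg B (by omega)
          have h2 : (K : ℤ) = B % g + g * s := by
            rw [hK]; push_cast [Int.toNat_of_nonneg h1]; ring
          rw [h2, Int.add_mul_emod_self_left, Int.emod_emod_of_dvd _ dvd_rfl]
        have hcong : (g : ℤ) ∣ ((K : ℤ) * e - g2) := by
          have h1 : (g : ℤ) ∣ ((K : ℤ) - B) := by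
            have h2 : ((K : ℤ) - B) % g = 0 := by
              rw [Int.sub_emod, hKB, sub_self, Int.zero_emod]
            exact Int.dvd_of_emod_eq_zero h2
          obtain ⟨x, hx⟩ := h1
          have : (K : ℤ) * e - g2 = g * (x * e - A) := by
            rw [hbez]
            have : (K : ℤ) = B + g * x := by omega
            rw [this]; ring
          exact ⟨x * e - A, this⟩
        have hKge : c + g2 ≤ m0 + K * e := by
          have h1 : s ≤ K := by
            have : g * s ≤ K := by rw [hK]; omega
            nlinarith
          have : s ≤ K * e := le_trans h1 (Nat.le_mul_of_pos_right K he0)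
          omega
        set D : ℕ := m0 + K * e - (c + g2) with hD
        have hgD : g ∣ D := by
          have h1 : (g : ℤ) ∣ ((c : ℤ) - m0) := by
            obtain ⟨x, hx⟩ := hdvd
            refine ⟨x, ?_⟩
            have : ((c - m0 : ℕ) : ℤ) = (c : ℤ) - m0 := by omega
            rw [← this, hx]; push_cast; ring
          have h2 : (D : ℤ) = ((K : ℤ) * e - g2) - ((c : ℤ) - m0) := by
            rw [hD]; push_cast [hKge]; ring
          have h3 : (g : ℤ) ∣ (D : ℤ) := by
            rw [h2]; exact dvd_sub hcong h1
          exact_mod_cast h3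
        obtain ⟨j, hj⟩ := hgD
        set u : ℕ := c + j * g with hu
        have huT : u ∈ T := hAP j
        have hvT : m0 + K * e ∈ T := by
          have := hT m0 hm0 t htT htm0 K
          rwa [← he] at this
        have huv : u < m0 + K * e := by
          have : m0 + K * e = u + g2 := by
            have hjg : j * g = g * j := Nat.mul_comm j g
            omega
          omega
        have hAP2 : ∀ k : ℕ, u + k * g2 ∈ T := by
          intro k
          have := hT u huT (m0 + K * e) hvT huv k
          have hsub : m0 + K * e - u = g2 := by
            have hjg : j * g = g * j := Nat.mul_comm j g
            omega
          rwa [hsub] at this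
        refine ih g2 hg2lt hg2pos ⟨u, huT, by omega, ?_, hAP2⟩
        have h1 : u - m0 = (c - m0) + j * g := by omega
        rw [h1]
        refine Nat.dvd_add (dvd_trans (Nat.gcd_dvd_left g e) hdvd) ?_
        exact Dvd.dvd.mul_left (Nat.gcd_dvd_left g e) j
  obtain ⟨t1, ht1T, ht1⟩ := hinf.exists_gt m0
  refine hrec (t1 - m0) (by omega) ⟨m0, hm0, le_rfl, by simp, fun k => hT m0 hm0 t1 ht1T ht1 k⟩

/-- Decomposition form of eventual periodicity. -/
lemma EP.decomp {s : Set ℕ} (h : EP s) :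
    ∃ d, 0 < d ∧ ∃ M, ∀ n, M ≤ n → (n ∈ s ↔ M + (n - M) % d ∈ s) := by
  obtain ⟨d, hd, M, hM⟩ := h
  refine ⟨d, hd, M, fun n hn => ?_⟩
  have key : M + (n - M) % d ∈ s ↔ (M + (n - M) % d) + ((n - M) / d) * d ∈ s :=
    EP.iterate hM _ _ (by omega)
  have heq : (M + (n - M) % d) + ((n - M) / d) * d = n := by
    have h1 := Nat.mod_add_div (n - M) d
    have h2 : (n - M) / d * d = d * ((n - M) / d) := Nat.mul_comm _ _
    omega
  rw [heq] at key
  exact key.symm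


/-! ### Main assembly -/

def Good (Z : Set (FreeMonoid α)) : Prop :=
  ∃ (F : Set (FreeMonoid α)) (N : ℕ) (a w b : Fin N → FreeMonoid α),
    F.Finite ∧ F ⊆ Z ∧ (∀ i, w i ≠ 1) ∧
    (∀ i j, i ≠ j →
      Disjoint (sandwich (a i) (w i) (b i)) (sandwich (a j) (w j) (b j))) ∧
    (∀ i, Disjoint F (sandwich (a i) (w i) (b i))) ∧
    Z = F ∪ ⋃ i, sandwich (a i) (w i) (b i)

lemma iUnion_fin_add {β : Type*} (N M : ℕ) (g : Fin (N + M) → Set β) :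
    (⋃ i, g i) = (⋃ i : Fin N, g (Fin.castAdd M i)) ∪ ⋃ i : Fin M, g (Fin.natAdd N i) := by
  ext x
  simp only [Set.mem_iUnion, Set.mem_union]
  constructor
  · rintro ⟨i, hi⟩
    exact Fin.addCases (motive := fun i => x ∈ g i →
        (∃ j : Fin N, x ∈ g (Fin.castAdd M j)) ∨ ∃ j : Fin M, x ∈ g (Fin.natAdd N j))
      (fun j hj => Or.inl ⟨j, hj⟩) (fun j hj => Or.inr ⟨j, hj⟩) i hi
  · rintro (⟨i, hi⟩ | ⟨i, hi⟩)
    · exact ⟨_, hi⟩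
    · exact ⟨_, hi⟩

lemma Good.empty : Good (∅ : Set (FreeMonoid α)) :=
  ⟨∅, 0, Fin.elim0, Fin.elim0, Fin.elim0, Set.finite_empty, Set.empty_subset _,
    fun i => i.elim0, fun i => i.elim0, fun i => i.elim0, by simp⟩

lemma Good.step {Z : Set (FreeMonoid α)} (hG : Good Z) (a w b : FreeMonoid α) :
    Good (Z ∪ sandwich a w b) := by
  classical
  obtain ⟨F, N, A, W, B, hF, hFZ, hW, hdisj, hFdisj, hZ⟩ := hG
  by_cases hw : w = 1
  · -- degenerate sandwich: a singleton
    subst hw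
    have hS : sandwich a 1 b = {a * b} := by
      ext x; simp [sandwich]
    refine ⟨F ∪ ({a * b} \ ⋃ i, sandwich (A i) (W i) (B i)), N, A, W, B,
      hF.union ((Set.finite_singleton _).subset Set.diff_subset), ?_, hW, hdisj, ?_, ?_⟩
    · rintro x (hx | ⟨hx, -⟩)
      · exact Or.inl (hFZ hx)
      · exact Or.inr (hS ▸ hx)
    · intro i
      refine Set.disjoint_union_left.mpr ⟨hFdisj i, Set.disjoint_left.mpr ?_⟩
      rintro x ⟨-, hx2⟩ hxi
      exact hx2 (Set.mem_iUnion.mpr ⟨i, hxi⟩)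
    · rw [hZ, hS]
      ext x
      simp only [Set.mem_union, Set.mem_diff, Set.mem_singleton_iff]
      by_cases hx : x ∈ ⋃ i, sandwich (A i) (W i) (B i) <;> tauto
  · -- main case
    set f : ℕ → FreeMonoid α := fun n => a * w ^ n * b with hfdef
    have hf : Function.Injective f := sandwich_injective a w b hw
    set T : Set ℕ := f ⁻¹' (F ∪ ⋃ i, sandwich (A i) (W i) (B i)) with hTdef
    have hEPUnion : ∀ (n : ℕ) (S : Fin n → Set ℕ), (∀ i, EP (S i)) → EP (⋃ i, S i) := by
      intro n
      induction n with
      | zero => intro S _; simp only [Set.iUnion_of_empty]; exact EP.of_finite Set.finite_empty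
      | succ n ih =>
        intro S hS
        rw [iUnion_fin_add n 1 S]
        refine EP.union (ih _ fun i => hS _) ?_
        have : (⋃ i : Fin 1, S (Fin.natAdd n i)) = S (Fin.natAdd n 0) := by
          ext x; simp [Fin.fin_one_eq_zero]
        rw [this]; exact hS _
    have hTEP : EP T := by
      have hXT : T = (f ⁻¹' F) ∪ ⋃ i, f ⁻¹' (sandwich (A i) (W i) (B i)) := by
        rw [hTdef, Set.preimage_union, Set.preimage_iUnion]
      rw [hXT]
      refine EP.union (EP.of_finite (hF.preimage hf.injOn)) ?_
      refine hEPUnion N _ fun i => EP.of_closed ?_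
      exact sandwich_index_closed a w b (A i) (W i) (B i) hw (hW i)
    obtain ⟨d, hd, M, hM⟩ := hTEP.compl.decomp
    set R : Finset ℕ := (Finset.range d).filter (fun r => M + r ∈ Tᶜ) with hR
    set N2 := R.card with hN2
    set e : Fin N2 → ℕ := fun i => (R.equivFin.symm i : ℕ) with he
    have he_mem : ∀ i, e i ∈ R := fun i => (R.equivFin.symm i).2
    have he_lt : ∀ i, e i < d := fun i => Finset.mem_range.mp (Finset.mem_filter.mp (he_mem i)).1
    have he_G : ∀ i, M + e i ∈ Tᶜ := fun i => (Finset.mem_filter.mp (he_mem i)).2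
    have he_inj : Function.Injective e := fun i j h =>
      R.equivFin.symm.injective (Subtype.ext h)
    set S2 : Fin N2 → Set (FreeMonoid α) :=
      fun i => sandwich (a * w ^ (M + e i)) (w ^ d) b with hS2def
    set AP : Fin N2 → Set ℕ := fun i => {n | ∃ k, n = M + e i + d * k} with hAP
    have hgen : ∀ (r k : ℕ), a * w ^ (M + r) * (w ^ d) ^ k * b = f (M + r + d * k) := by
      intro r k
      show _ = a * w ^ (M + r + d * k) * b
      rw [rearr a w b (M + r) d k, mul_assoc]
    have hS2 : ∀ i, S2 i = f '' AP i := by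
      intro i
      ext x
      constructor
      · rintro ⟨k, hk⟩
        exact ⟨M + e i + d * k, ⟨k, rfl⟩, by rw [← hk]; exact (hgen (e i) k).symm⟩
      · rintro ⟨n, ⟨k, rfl⟩, rfl⟩
        exact ⟨k, hgen (e i) k⟩
    have hGidx : Tᶜ = (Tᶜ ∩ Set.Iio M) ∪ ⋃ i, AP i := by
      ext n
      constructor
      · intro hn
        by_cases hnM : n < M
        · exact Or.inl ⟨hn, hnM⟩
        · right
          have hnM' : M ≤ n := by omega
          have hMr : M + (n - M) % d ∈ Tᶜ := (hM n hnM').mp hn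
          have hrR : (n - M) % d ∈ R :=
            Finset.mem_filter.mpr ⟨Finset.mem_range.mpr (Nat.mod_lt _ hd), hMr⟩
          refine Set.mem_iUnion.mpr ⟨R.equivFin ⟨_, hrR⟩, (n - M) / d, ?_⟩
          have hei : e (R.equivFin ⟨_, hrR⟩) = (n - M) % d := by
            simp [he]
          rw [hei]
          have := Nat.mod_add_div (n - M) d
          omega
      · rintro (⟨hn, -⟩ | hn)
        · exact hn
        · obtain ⟨i, k, rfl⟩ := Set.mem_iUnion.mp hn
          refine (hM _ (by omega)).mpr ?_
          have h1 : (M + e i + d * k - M) % d = e i := by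
            have h2 : M + e i + d * k - M = e i + d * k := by omega
            rw [h2, Nat.add_mul_mod_self_left, Nat.mod_eq_of_lt (he_lt i)]
          rw [h1]
          exact he_G i
    have himage : f '' Tᶜ = f '' (Tᶜ ∩ Set.Iio M) ∪ ⋃ i, S2 i := by
      conv_lhs => rw [hGidx]
      rw [Set.image_union, Set.image_iUnion]
      congr 1
      exact Set.iUnion_congr fun i => (hS2 i).symm
    have hAPsub : ∀ j, AP j ⊆ Tᶜ := fun j =>
      le_trans (Set.subset_iUnion AP j) (by rw [hGidx]; exact Set.subset_union_right)
    have hnew_old : ∀ j : Fin N2, ∀ x ∈ S2 j,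
        x ∉ F ∪ ⋃ i, sandwich (A i) (W i) (B i) := by
      intro j x hx
      rw [hS2 j] at hx
      obtain ⟨n, hn, rfl⟩ := hx
      exact fun hc => hAPsub j hn hc
    have hwd : w ^ d ≠ 1 := by
      intro hcon
      have h1 : d * w.length = 0 := by
        have h0 := congrArg FreeMonoid.length hcon
        rw [length_pow] at h0
        have h00 : FreeMonoid.length (1 : FreeMonoid α) = 0 := rfl
        omega
      rcases Nat.mul_eq_zero.mp h1 with h | h
      · omega
      · exact hw (FreeMonoid.length_eq_zero.mp h)
    have hnewnew : ∀ i j : Fin N2, i ≠ j → Disjoint (S2 i) (S2 j) := by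
      intro i j hij
      rw [Set.disjoint_left]
      rintro x ⟨k, hk⟩ ⟨k', hk'⟩
      replace hk : a * w ^ (M + e i) * (w ^ d) ^ k * b = x := hk
      replace hk' : a * w ^ (M + e j) * (w ^ d) ^ k' * b = x := hk'
      rw [hgen (e i) k] at hk
      rw [hgen (e j) k'] at hk'
      have : M + e i + d * k = M + e j + d * k' := hf (hk.trans hk'.symm)
      have h1 : e i + d * k = e j + d * k' := by omega
      have h2 : e i = e j := by
        have := congrArg (· % d) h1
        simpa [Nat.add_mul_mod_self_left, Nat.mod_eq_of_lt (he_lt i),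
          Nat.mod_eq_of_lt (he_lt j)] using this
      exact hij (he_inj h2)
    have hON : ∀ (i1 : Fin N) (j1 : Fin N2),
        Disjoint (sandwich (A i1) (W i1) (B i1)) (S2 j1) := by
      intro i1 j1
      rw [Set.disjoint_left]
      intro x hx hx2
      exact hnew_old j1 x hx2 (Or.inr (Set.mem_iUnion.mpr ⟨i1, hx⟩))
    have happ : ∀ i : Fin (N + N2),
        sandwich (Fin.append A (fun i => a * w ^ (M + e i)) i)
          (Fin.append W (fun _ => w ^ d) i) (Fin.append B (fun _ => b) i)
        = Fin.append (fun i => sandwich (A i) (W i) (B i)) S2 i := by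
      intro i
      induction i using Fin.addCases with
      | left i1 => simp only [Fin.append_left]
      | right i1 => simp only [Fin.append_right]; rfl
    have hU : (⋃ i, sandwich (Fin.append A (fun i => a * w ^ (M + e i)) i)
          (Fin.append W (fun _ => w ^ d) i) (Fin.append B (fun _ => b) i))
        = (⋃ i, sandwich (A i) (W i) (B i)) ∪ ⋃ i, S2 i := by
      rw [Set.iUnion_congr happ, iUnion_fin_add N N2]
      congr 1
      · exact Set.iUnion_congr fun i => by rw [Fin.append_left]
      · exact Set.iUnion_congr fun i => by rw [Fin.append_right]
    refine ⟨F ∪ f '' (Tᶜ ∩ Set.Iio M), N + N2,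
      Fin.append A fun i => a * w ^ (M + e i),
      Fin.append W fun _ => w ^ d,
      Fin.append B fun _ => b, ?_, ?_, ?_, ?_, ?_, ?_⟩
    · exact hF.union (((Set.finite_Iio M).subset Set.inter_subset_right).image f)
    · rintro x (hx | ⟨n, -, rfl⟩)
      · exact Or.inl (hFZ hx)
      · exact Or.inr ⟨n, rfl⟩
    · intro i
      refine Fin.addCases (motive := fun i => Fin.append W (fun _ => w ^ d) i ≠ 1) ?_ ?_ i
      · intro j; rw [Fin.append_left]; exact hW j
      · intro j; rw [Fin.append_right]; exact hwd
    · intro i j hij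
      rw [happ i, happ j]
      revert hij
      induction i using Fin.addCases with
      | left i1 =>
        induction j using Fin.addCases with
        | left j1 =>
          intro hij
          simp only [Fin.append_left]
          exact hdisj i1 j1 fun h => hij (by rw [h])
        | right j1 =>
          intro _
          simp only [Fin.append_left, Fin.append_right]
          exact hON i1 j1
      | right i1 =>
        induction j using Fin.addCases with
        | left j1 =>
          intro _
          simp only [Fin.append_left, Fin.append_right]
          exact (hON j1 i1).symm
        | right j1 =>
          intro hij
          simp only [Fin.append_right]
          exact hnewnew i1 j1 fun h => hij (by rw [h])
    · intro i
      rw [happ i]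
      induction i using Fin.addCases with
      | left i1 =>
        simp only [Fin.append_left]
        refine Set.disjoint_union_left.mpr ⟨hFdisj i1, Set.disjoint_left.mpr ?_⟩
        rintro x ⟨n, ⟨hnG, -⟩, rfl⟩ hxi
        exact hnG (Or.inr (Set.mem_iUnion.mpr ⟨i1, hxi⟩))
      | right i1 =>
        simp only [Fin.append_right]
        refine Set.disjoint_union_left.mpr
          ⟨Set.disjoint_left.mpr ?_, Set.disjoint_left.mpr ?_⟩
        · intro x hx hx2
          exact hnew_old i1 x hx2 (Or.inl hx)
        · rintro x ⟨n, ⟨-, hnlt⟩, rfl⟩ hx2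
          rw [hS2 i1] at hx2
          obtain ⟨m, ⟨k, rfl⟩, hm⟩ := hx2
          have h1 := hf hm
          simp only [Set.mem_Iio] at hnlt
          omega
    · rw [hZ, hU]
      apply Set.Subset.antisymm
      · rintro x (hx | hx)
        · rcases hx with hx | hx
          · exact Or.inl (Or.inl hx)
          · exact Or.inr (Or.inl hx)
        · obtain ⟨n, rfl⟩ := hx
          by_cases hnT : n ∈ T
          · rcases (hnT : f n ∈ F ∪ ⋃ i, sandwich (A i) (W i) (B i)) with hx | hx
            · exact Or.inl (Or.inl hx)
            · exact Or.inr (Or.inl hx)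
          · have hmem : f n ∈ f '' Tᶜ := ⟨n, hnT, rfl⟩
            rw [himage] at hmem
            rcases hmem with hx | hx
            · exact Or.inl (Or.inr hx)
            · exact Or.inr (Or.inr hx)
      · rintro x (hx | hx)
        · rcases hx with hx | hx
          · exact Or.inl (Or.inl hx)
          · obtain ⟨n, -, rfl⟩ := hx
            exact Or.inr ⟨n, rfl⟩
        · rcases hx with hx | hx
          · exact Or.inl (Or.inr hx)
          · have hmem : x ∈ f '' Tᶜ := by rw [himage]; exact Or.inr hx
            obtain ⟨n, -, rfl⟩ := hmem
            exact Or.inr ⟨n, rfl⟩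

end SandwichAux

theorem finite_union_sandwiches_to_free_sandwich_decomposition
    {α : Type*} (Z : Set (FreeMonoid α))
    (h : ∃ (s : ℕ) (a w b : Fin s → FreeMonoid α),
      Z = ⋃ i, sandwich (a i) (w i) (b i)) :
    ∃ (F : Set (FreeMonoid α)) (N : ℕ) (a w b : Fin N → FreeMonoid α),
      F.Finite ∧ F ⊆ Z ∧
      (∀ i, w i ≠ 1) ∧
      (∀ i, Function.Injective fun n : ℕ => a i * (w i) ^ n * b i) ∧
      (∀ i j, i ≠ j →
        Disjoint (sandwich (a i) (w i) (b i)) (sandwich (a j) (w j) (b j))) ∧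
      (∀ i, Disjoint F (sandwich (a i) (w i) (b i))) ∧
      Z = F ∪ ⋃ i, sandwich (a i) (w i) (b i) := by
  obtain ⟨s, aa, ww, bb, rfl⟩ := h
  have hGood : ∀ (s : ℕ) (aa ww bb : Fin s → FreeMonoid α),
      SandwichAux.Good (⋃ i, sandwich (aa i) (ww i) (bb i)) := by
    intro s
    induction s with
    | zero =>
      intro aa ww bb
      simp only [Set.iUnion_of_empty]
      exact SandwichAux.Good.empty
    | succ n ih =>
      intro aa ww bb
      have hsplit : (⋃ i, sandwich (aa i) (ww i) (bb i)) =
          (⋃ i : Fin n, sandwich (aa (Fin.castAdd 1 i)) (ww (Fin.castAdd 1 i))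
            (bb (Fin.castAdd 1 i)))
          ∪ sandwich (aa (Fin.natAdd n 0)) (ww (Fin.natAdd n 0)) (bb (Fin.natAdd n 0)) := by
        rw [SandwichAux.iUnion_fin_add n 1]
        congr 1
        ext x
        simp [Fin.fin_one_eq_zero]
      rw [hsplit]
      exact (ih _ _ _).step _ _ _
  obtain ⟨F, N, A, W, B, hF, hFZ, hW, hdisj, hFdisj, hZ⟩ := hGood s aa ww bb
  exact ⟨F, N, A, W, B, hF, hFZ, hW,
    fun i => SandwichAux.sandwich_injective _ _ _ (hW i), hdisj, hFdisj, hZ⟩
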